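/- Let A be an n×n real M-matrix with positive diagonal entries (i.e. A is an L-matrix that is invertible with A^{-1} ≥ 0 componentwise), and let D be the diagonal part of A. Then the spectral radius of the Jacobi iteration matrix satisfies ρ(I − D^{-1} A) < 1; in particular, the Jacobi iteration for the linear system A x = b converges for every initial vector. -/

import Mathlib

open Matrix

/-- If `A` is an M-matrix with positive diagonal entries (an invertible L-matrix with
componentwise nonnegative inverse) and `D` is its diagonal part, then every complex
eigenvalue of the Jacobi iteration matrix `I - D⁻¹ A` has modulus less than one,
i.e. `ρ(I - D⁻¹ A) < 1` and the Jacobi iteration converges. -/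
theorem mmatrix_jacobi_spectral_radius_lt_one {n : ℕ} (A : Matrix (Fin n) (Fin n) ℝ)
    (hZ : ∀ i j, i ≠ j → A i j ≤ 0)
    (hL : ∀ i, 0 < A i i)
    (hA : IsUnit A) (hinv : ∀ i j, 0 ≤ A⁻¹ i j) :
    ∀ (μ : ℂ) (v : Fin n → ℂ), v ≠ 0 →
      ((1 - (Matrix.diagonal fun i => A i i)⁻¹ * A).map (fun a : ℝ => (a : ℂ))).mulVec v
        = μ • v →
      ‖μ‖ < 1 := by
  intro μ v hv heig
  set D : Matrix (Fin n) (Fin n) ℝ := Matrix.diagonal fun i => A i i with hD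
  have hDdet : IsUnit D.det := by
    rw [hD, Matrix.det_diagonal]
    exact isUnit_iff_ne_zero.2 (Finset.prod_ne_zero_iff.2 fun i _ => (hL i).ne')
  have hAdet : IsUnit A.det := (Matrix.isUnit_iff_isUnit_det A).1 hA
  have hDinv : D⁻¹ = Matrix.diagonal fun i => (A i i)⁻¹ := by
    apply Matrix.inv_eq_right_inv
    rw [hD, Matrix.diagonal_mul_diagonal]
    simp [mul_inv_cancel₀ (hL _).ne']
  set J : Matrix (Fin n) (Fin n) ℝ := 1 - D⁻¹ * A with hJ
  have hJentry : ∀ i j, J i j = (if i = j then 1 else 0) - (A i i)⁻¹ * A i j := by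
    intro i j
    simp [hJ, hDinv, Matrix.sub_apply, Matrix.one_apply, Matrix.diagonal_mul]
  have hJnn : ∀ i j, 0 ≤ J i j := by
    intro i j
    rw [hJentry]
    by_cases h : i = j
    · subst h
      simp [inv_mul_cancel₀ (hL i).ne']
    · simp only [if_neg h]
      have : 0 ≤ -((A i i)⁻¹ * A i j) :=
        neg_nonneg.2 (mul_nonpos_of_nonneg_of_nonpos (inv_nonneg.2 (hL i).le) (hZ i j h))
      linarith
  set B : Matrix (Fin n) (Fin n) ℝ := A⁻¹ * D with hB
  have hBnn : ∀ i j, 0 ≤ B i j := by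
    intro i j
    rw [hB, hD, Matrix.mul_diagonal]
    exact mul_nonneg (hinv i j) (hL j).le
  have hBJ : B * (1 - J) = 1 := by
    have h1 : (1 : Matrix (Fin n) (Fin n) ℝ) - J = D⁻¹ * A := by rw [hJ, sub_sub_cancel]
    rw [h1, hB]
    calc A⁻¹ * D * (D⁻¹ * A) = A⁻¹ * (D * D⁻¹) * A := by
            rw [Matrix.mul_assoc, Matrix.mul_assoc, Matrix.mul_assoc]
      _ = A⁻¹ * A := by rw [Matrix.mul_nonsing_inv D hDdet, Matrix.mul_one]
      _ = 1 := Matrix.nonsing_inv_mul A hAdet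
  set w : Fin n → ℝ := fun i => ‖v i‖ with hw
  have hwnn : ∀ i, 0 ≤ w i := fun i => norm_nonneg _
  -- key componentwise inequality: |μ| * w i ≤ (J.mulVec w) i
  have hkey : ∀ i, ‖μ‖ * w i ≤ (J.mulVec w) i := by
    intro i
    have h1 : (∑ j, ((J i j : ℂ)) * v j) = μ * v i := by
      have := congrFun heig i
      simpa [Matrix.mulVec, dotProduct, Matrix.map_apply, Pi.smul_apply,
        smul_eq_mul] using this
    calc ‖μ‖ * w i = ‖μ * v i‖ := by
            rw [hw]; simp [norm_mul]
      _ = ‖∑ j, ((J i j : ℂ)) * v j‖ := by rw [h1]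
      _ ≤ ∑ j, ‖((J i j : ℂ)) * v j‖ := norm_sum_le _ _
      _ = ∑ j, J i j * w j := by
            refine Finset.sum_congr rfl fun j _ => ?_
            rw [norm_mul, Complex.norm_real, Real.norm_eq_abs, abs_of_nonneg (hJnn i j)]
      _ = (J.mulVec w) i := by simp [Matrix.mulVec, dotProduct]
  -- w = B.mulVec ((1 - J).mulVec w)
  have hwid : w = B.mulVec ((1 - J).mulVec w) := by
    rw [Matrix.mulVec_mulVec, hBJ, Matrix.one_mulVec]
  -- (1 - J).mulVec w ≤ (1 - |μ|) • w componentwise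
  have hstep : ∀ j, ((1 - J).mulVec w) j ≤ (1 - ‖μ‖) * w j := by
    intro j
    have : ((1 - J).mulVec w) j = w j - (J.mulVec w) j := by
      simp [Matrix.sub_mulVec, Matrix.one_mulVec]
    rw [this]
    have := hkey j
    nlinarith
  -- monotonicity through B
  have hmono : ∀ i, (B.mulVec ((1 - J).mulVec w)) i
      ≤ (1 - ‖μ‖) * (B.mulVec w) i := by
    intro i
    have : (B.mulVec ((1 - J).mulVec w)) i = ∑ j, B i j * ((1 - J).mulVec w) j := by
      simp [Matrix.mulVec, dotProduct]
    rw [this]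
    have h2 : (1 - ‖μ‖) * (B.mulVec w) i
        = ∑ j, B i j * ((1 - ‖μ‖) * w j) := by
      simp only [Matrix.mulVec, dotProduct, Finset.mul_sum]
      exact Finset.sum_congr rfl fun j _ => by ring
    rw [h2]
    exact Finset.sum_le_sum fun j _ =>
      mul_le_mul_of_nonneg_left (hstep j) (hBnn i j)
  obtain ⟨i0, hi0⟩ : ∃ i, v i ≠ 0 := Function.ne_iff.1 hv
  have hwi0 : 0 < w i0 := by
    rw [hw]; exact norm_pos_iff.mpr hi0
  have hfinal : w i0 ≤ (1 - ‖μ‖) * (B.mulVec w) i0 := by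
    calc w i0 = (B.mulVec ((1 - J).mulVec w)) i0 := by rw [← hwid]
      _ ≤ _ := hmono i0
  have hBw : 0 ≤ (B.mulVec w) i0 := by
    have : (B.mulVec w) i0 = ∑ j, B i0 j * w j := by
      simp [Matrix.mulVec, dotProduct]
    rw [this]
    exact Finset.sum_nonneg fun j _ => mul_nonneg (hBnn i0 j) (hwnn j)
  by_contra hcon
  push_neg at hcon
  have : (1 - ‖μ‖) * (B.mulVec w) i0 ≤ 0 :=
    mul_nonpos_of_nonpos_of_nonneg (by linarith) hBw
  linarith
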